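/- For every natural number n ≥ 2 and every real δ > 0: 2·arsinh(sin(π/n) · sinh(4δ) · n) > 8δ. (This shows that two consecutive radial half-lines at angle 2π/n apart, truncated at hyperbolic distance r₀ = arsinh(n·sinh(4δ)) from their common apex, are at hyperbolic distance more than 8δ from each other, since that distance equals 2·arsinh(sin(π/n)·sinh r₀).) -/
import Mathlib

open Real

/-- For every `n ≥ 2` and `δ > 0`:
`2·arsinh(sin(π/n) · sinh(4δ) · n) > 8δ`. -/
theorem stmt_17 (n : ℕ) (hn : 2 ≤ n) (δ : ℝ) (hδ : 0 < δ) :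
    8 * δ < 2 * Real.arsinh (Real.sin (π / n) * Real.sinh (4 * δ) * n) := by
  have hn0 : (0:ℝ) < n := by positivity
  have hsin : 2 / π * (π / n) ≤ Real.sin (π / n) := by
    apply Real.mul_le_sin (by positivity)
    rw [div_le_div_iff₀ hn0 two_pos]
    nlinarith [Real.pi_pos, (show (2:ℝ) ≤ n by exact_mod_cast hn)]
  have h2 : (2:ℝ) / n ≤ Real.sin (π / n) := by
    have : 2 / π * (π / n) = 2 / n := by
      field_simp
    linarith
  have hsinh : 0 < Real.sinh (4 * δ) := Real.sinh_pos_iff.2 (by linarith)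
  have harg : Real.sinh (4 * δ) < Real.sin (π / n) * Real.sinh (4 * δ) * n := by
    have : (2:ℝ) ≤ Real.sin (π / n) * n := by
      rw [div_le_iff₀ hn0] at h2; linarith
    nlinarith
  have := Real.arsinh_lt_arsinh.2 harg
  rw [Real.arsinh_sinh] at this
  linarith
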